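/- Let K : ℝ → ℝ be continuous with K(t) ≤ 0 for all t, and let j : ℝ → ℝ be a Jacobi solution (j'' = -K·j) such that t ↦ |j(t)| is monotone on ℝ (either nonincreasing on all of ℝ or nondecreasing on all of ℝ). If j(t₀) = 0 for some t₀ ∈ ℝ, then j is identically zero. In other words, a stable or unstable Jacobi field can vanish only if it is identically zero. -/

import Mathlib

open Set

/-- Uniqueness for the Jacobi ODE: if `j` and `j'` vanish at a point, `j ≡ 0`. -/
lemma jacobi_unique_aux (K j : ℝ → ℝ) (hK : Continuous K)
    (hj : Differentiable ℝ j) (hj' : Differentiable ℝ (deriv j))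
    (hjacobi : ∀ t, deriv (deriv j) t = -K t * j t)
    (t₁ : ℝ) (h1 : j t₁ = 0) (h2 : deriv j t₁ = 0) : ∀ t, j t = 0 := by
  intro t
  set h : ℝ → ℝ := fun u => j u ^ 2 + deriv j u ^ 2 with hh
  have hd : ∀ s, HasDerivAt h
      (2 * j s ^ 1 * deriv j s + 2 * deriv j s ^ 1 * (-K s * j s)) s := by
    intro s
    have H1 : HasDerivAt j (deriv j s) s := (hj s).hasDerivAt
    have H2 : HasDerivAt (deriv j) (-K s * j s) s := by
      simpa [hjacobi s] using (hj' s).hasDerivAt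
    exact ((H1.pow 2).add (H2.pow 2)).congr_deriv (by norm_num)
  have hdiff : Differentiable ℝ h := fun s => (hd s).differentiableAt
  have hnn : ∀ s, 0 ≤ h s := fun s => by positivity
  -- bound on the coefficient on a compact interval
  obtain ⟨C, hC⟩ : ∃ C, ∀ s ∈ Icc (min t t₁) (max t t₁), |1 - K s| ≤ C := by
    obtain ⟨C, hC⟩ := (isCompact_Icc (a := min t t₁) (b := max t t₁)).exists_bound_of_continuousOn
      ((continuous_const.sub hK).continuousOn)
    exact ⟨C, fun s hs => by simpa using hC s hs⟩
  have hderiv_bound : ∀ s ∈ Icc (min t t₁) (max t t₁), deriv h s ≤ C * h s ∧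
      -(C * h s) ≤ deriv h s := by
    intro s hs
    have hD : deriv h s = (1 - K s) * (2 * j s * deriv j s) := by
      rw [(hd s).deriv]; ring
    have habs : |2 * j s * deriv j s| ≤ h s := by
      have := sq_nonneg (j s - deriv j s)
      have := sq_nonneg (j s + deriv j s)
      rw [abs_le]
      constructor <;> (simp only [hh]; nlinarith [sq_nonneg (j s - deriv j s), sq_nonneg (j s + deriv j s)])
    have hKb := hC s hs
    have h1K : |1 - K s| * |2 * j s * deriv j s| ≤ C * h s := by
      have h0 : (0:ℝ) ≤ |1 - K s| := abs_nonneg _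
      have : |1 - K s| ≤ C := hKb
      nlinarith [abs_nonneg (2 * j s * deriv j s)]
    have hDabs : |deriv h s| ≤ C * h s := by
      rw [hD, abs_mul]; exact h1K
    exact ⟨le_trans (le_abs_self _) hDabs, by
      have := neg_abs_le (deriv h s); linarith⟩
  have key : h t = 0 := by
    rcases le_total t₁ t with hle | hle
    · -- forward: g s = h s * exp (-C * s) is antitone on [t₁, t]
      set g : ℝ → ℝ := fun s => h s * Real.exp (-C * s) with hg
      have hgd : ∀ s, HasDerivAt g
          (deriv h s * Real.exp (-C * s) + h s * (Real.exp (-C * s) * -C)) s := by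
        intro s
        have he : HasDerivAt (fun u => Real.exp (-C * u)) (Real.exp (-C * s) * -C) s := by
          simpa using ((hasDerivAt_id s).const_mul (-C)).exp
        exact ((hdiff s).hasDerivAt).mul he
      have hanti : AntitoneOn g (Icc t₁ t) := by
        apply antitoneOn_of_deriv_nonpos (convex_Icc _ _)
          (Continuous.continuousOn (by rw [hg]; exact hdiff.continuous.mul (by fun_prop)))
        · exact fun s _ => ((hgd s).differentiableAt).differentiableWithinAt
        · intro s hs
          rw [interior_Icc] at hs
          have hs' : s ∈ Icc (min t t₁) (max t t₁) := by
            constructor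
            · exact le_trans (min_le_right _ _) hs.1.le
            · exact le_trans hs.2.le (le_max_left _ _)
          have hb := (hderiv_bound s hs').1
          have hexp : 0 < Real.exp (-C * s) := Real.exp_pos _
          rw [(hgd s).deriv]
          nlinarith
      have h0 : g t₁ = 0 := by simp [hg, hh, h1, h2]
      have := hanti ⟨le_refl _, hle⟩ ⟨hle, le_refl _⟩ hle
      rw [h0] at this
      simp only [hg] at this
      have hexp : 0 < Real.exp (-C * t) := Real.exp_pos _
      nlinarith [hnn t]
    · -- backward: g s = h s * exp (C * s) is monotone on [t, t₁]
      set g : ℝ → ℝ := fun s => h s * Real.exp (C * s) with hg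
      have hgd : ∀ s, HasDerivAt g
          (deriv h s * Real.exp (C * s) + h s * (Real.exp (C * s) * C)) s := by
        intro s
        have he : HasDerivAt (fun u => Real.exp (C * u)) (Real.exp (C * s) * C) s := by
          simpa using ((hasDerivAt_id s).const_mul C).exp
        exact ((hdiff s).hasDerivAt).mul he
      have hmono : MonotoneOn g (Icc t t₁) := by
        apply monotoneOn_of_deriv_nonneg (convex_Icc _ _)
          (Continuous.continuousOn (by rw [hg]; exact hdiff.continuous.mul (by fun_prop)))
        · exact fun s _ => ((hgd s).differentiableAt).differentiableWithinAt
        · intro s hs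
          rw [interior_Icc] at hs
          have hs' : s ∈ Icc (min t t₁) (max t t₁) := by
            constructor
            · exact le_trans (min_le_left _ _) hs.1.le
            · exact le_trans hs.2.le (le_max_right _ _)
          have hb := (hderiv_bound s hs').2
          have hexp : 0 < Real.exp (C * s) := Real.exp_pos _
          rw [(hgd s).deriv]
          nlinarith
      have h0 : g t₁ = 0 := by simp [hg, hh, h1, h2]
      have := hmono ⟨le_refl _, hle⟩ ⟨hle, le_refl _⟩ hle
      rw [h0] at this
      simp only [hg] at this
      have hexp : 0 < Real.exp (C * t) := Real.exp_pos _
      nlinarith [hnn t]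
  have : j t ^ 2 = 0 := by
    have hk : j t ^ 2 + deriv j t ^ 2 = 0 := by simpa [hh] using key
    nlinarith [sq_nonneg (j t), sq_nonneg (deriv j t)]
  exact pow_eq_zero_iff (n := 2) (by norm_num) |>.mp this

/-- Let `K : ℝ → ℝ` be continuous and nonpositive and `j : ℝ → ℝ` a Jacobi solution
(`j'' = -K · j`) such that `t ↦ |j t|` is monotone on `ℝ` (nonincreasing or
nondecreasing, i.e. `j` is a stable or unstable Jacobi field). If `j` vanishes at
some point, then `j` is identically zero. -/
theorem stable_or_unstable_jacobi_vanish (K j : ℝ → ℝ) (t₀ : ℝ)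
    (hK : Continuous K) (hKle : ∀ t, K t ≤ 0)
    (hj : Differentiable ℝ j) (hj' : Differentiable ℝ (deriv j))
    (hjacobi : ∀ t, deriv (deriv j) t = -K t * j t)
    (hmono : Antitone (fun t => |j t|) ∨ Monotone (fun t => |j t|))
    (h0 : j t₀ = 0) :
    ∀ t, j t = 0 := by
  rcases hmono with hA | hM
  · -- j = 0 on [t₀, ∞)
    have hz : ∀ s, t₀ ≤ s → j s = 0 := by
      intro s hs
      have := hA hs
      simp only [h0, abs_zero] at this
      exact abs_eq_zero.mp (le_antisymm this (abs_nonneg _))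
    have hj1 : j (t₀ + 1) = 0 := hz _ (by linarith)
    have heq : j =ᶠ[nhds (t₀ + 1)] fun _ => 0 := by
      filter_upwards [Ioi_mem_nhds (show t₀ < t₀ + 1 by linarith)] with s hs
      exact hz s (le_of_lt hs)
    have hj2 : deriv j (t₀ + 1) = 0 := by
      rw [heq.deriv_eq]; simp
    exact jacobi_unique_aux K j hK hj hj' hjacobi (t₀ + 1) hj1 hj2
  · -- j = 0 on (-∞, t₀]
    have hz : ∀ s, s ≤ t₀ → j s = 0 := by
      intro s hs
      have := hM hs
      simp only [h0, abs_zero] at this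
      exact abs_eq_zero.mp (le_antisymm this (abs_nonneg _))
    have hj1 : j (t₀ - 1) = 0 := hz _ (by linarith)
    have heq : j =ᶠ[nhds (t₀ - 1)] fun _ => 0 := by
      filter_upwards [Iio_mem_nhds (show t₀ - 1 < t₀ by linarith)] with s hs
      exact hz s (le_of_lt hs)
    have hj2 : deriv j (t₀ - 1) = 0 := by
      rw [heq.deriv_eq]; simp
    exact jacobi_unique_aux K j hK hj hj' hjacobi (t₀ - 1) hj1 hj2
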